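/- Let b > 0, β > 0, σ > β² − b, and let k be a positive integer, and let m_{σ,k}(ζ) = ((ζ² + b)/(ζ² + b + σ))^k on the strip S_β = {ζ ∈ ℂ : |Im ζ| < β}. Then for every nonnegative integer j there exists a constant C > 0 such that the j-th complex derivative of m_{σ,k} satisfies |m_{σ,k}^{(j)}(ζ)| ≤ C (1 + |ζ|)^{-j} for all ζ ∈ S_β. -/

import Mathlib

open Metric Nat

lemma cauchy_bound {f : ℂ → ℂ} {c : ℂ} {R M : ℝ} (hR : 0 < R)
    (hf : DifferentiableOn ℂ f (Metric.closedBall c R))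
    (hM : ∀ w ∈ Metric.closedBall c R, ‖f w‖ ≤ M) (j : ℕ) :
    ‖iteratedDeriv j f c‖ ≤ (j ! : ℝ) * M / R ^ j := by
  have hM0 : 0 ≤ M := le_trans (norm_nonneg _) (hM c (mem_closedBall_self hR.le))
  lift R to NNReal using hR.le with R hRR
  have hR' : 0 < R := by exact_mod_cast hR
  have h := hf.hasFPowerSeriesOnBall hR'
  have key : iteratedDeriv j f c = (j ! : ℕ) • (cauchyPowerSeries f c R j) (fun _ ↦ (1:ℂ)) := by
    rw [iteratedDeriv_eq_iteratedFDeriv, ← h.factorial_smul (1:ℂ) j]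
  -- integral bound
  have hcont : Continuous fun θ : ℝ => ‖f (circleMap c R θ)‖ := by
    apply Continuous.norm
    rw [← continuousOn_univ]
    exact hf.continuousOn.comp (continuous_circleMap c R).continuousOn
      (fun θ _ => sphere_subset_closedBall (circleMap_mem_sphere c R.coe_nonneg θ))
  have hint : (∫ θ : ℝ in (0)..2 * Real.pi, ‖f (circleMap c R θ)‖) ≤ 2 * Real.pi * M := by
    have := intervalIntegral.integral_mono_on (a := 0) (b := 2 * Real.pi)
      (by positivity) (hcont.intervalIntegrable 0 (2 * Real.pi))
      (intervalIntegrable_const (c := M) (μ := MeasureTheory.volume))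
      (fun θ _ => hM _ (sphere_subset_closedBall (circleMap_mem_sphere c R.coe_nonneg θ)))
    simpa [mul_comm] using this
  have hnorm := norm_cauchyPowerSeries_le f c R j
  have happ : ‖(cauchyPowerSeries f c R j) (fun _ ↦ (1:ℂ))‖ ≤ ‖cauchyPowerSeries f c R j‖ := by
    simpa using (cauchyPowerSeries f c R j).le_opNorm (fun _ ↦ (1:ℂ))
  have hfin : ‖(cauchyPowerSeries f c R j) (fun _ ↦ (1:ℂ))‖ ≤ M * ((R:ℝ)⁻¹) ^ j := by
    refine happ.trans (hnorm.trans ?_)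
    rw [abs_of_nonneg R.coe_nonneg]
    gcongr
    calc (2 * Real.pi)⁻¹ * ∫ θ : ℝ in (0)..2 * Real.pi, ‖f (circleMap c R θ)‖
        ≤ (2 * Real.pi)⁻¹ * (2 * Real.pi * M) := by gcongr
      _ = M := by field_simp
  rw [key, ← Nat.cast_smul_eq_nsmul (R := ℝ), norm_smul, Real.norm_natCast]
  calc (j ! : ℝ) * ‖(cauchyPowerSeries f c R j) (fun _ ↦ (1:ℂ))‖
      ≤ (j ! : ℝ) * (M * ((R:ℝ)⁻¹) ^ j) := by gcongr
    _ = (j ! : ℝ) * M / (R:ℝ) ^ j := by rw [inv_pow]; ring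

lemma Dfact (w c : ℂ) : (w - Complex.I * c) * (w + Complex.I * c) = w ^ 2 + c ^ 2 := by
  linear_combination (-(c:ℂ)^2) * Complex.I_sq

lemma sq_half_add_le (d X : ℝ) (hd : 0 ≤ d) (hX : 0 ≤ X) : ((d + X) / 2) ^ 2 ≤ d ^ 2 + X ^ 2 := by
  nlinarith [sq_nonneg (d - X)]


/-- Mihlin–Hörmander-type derivative estimates for the spectral multiplier
`m_{σ,k}(ζ) = ((ζ² + b)/(ζ² + b + σ))^k` on the strip `S_β = {ζ : |Im ζ| < β}`:
for every `j` there is `C > 0` with `|m_{σ,k}^{(j)}(ζ)| ≤ C (1 + |ζ|)^{-j}` on `S_β`. -/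
theorem stmt_1 (b β σ : ℝ) (hb : 0 < b) (hβ : 0 < β) (hσ : β ^ 2 - b < σ)
    (k : ℕ) (hk : 0 < k) (j : ℕ) :
    ∃ C : ℝ, 0 < C ∧ ∀ ζ : ℂ, |ζ.im| < β →
      ‖iteratedDeriv j
          (fun z : ℂ => ((z ^ 2 + (b : ℂ)) / (z ^ 2 + (b : ℂ) + (σ : ℂ))) ^ k) ζ‖
        ≤ C / (1 + ‖ζ‖) ^ j := by
  have hbσ : 0 < b + σ := by nlinarith [sq_nonneg β]
  set s : ℝ := Real.sqrt (b + σ) with hs_def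
  have hs2 : s ^ 2 = b + σ := Real.sq_sqrt hbσ.le
  have hs0 : 0 ≤ s := Real.sqrt_nonneg _
  have hsβ : β < s := by nlinarith
  set d : ℝ := s - β with hd_def
  have hd : 0 < d := sub_pos.mpr hsβ
  set m : ℝ := min 1 d with hm_def
  have hm : 0 < m := lt_min one_pos hd
  have hm1 : m ≤ 1 := min_le_left _ _
  have hmd : m ≤ d := min_le_right _ _
  set ε : ℝ := m / (4 * (1 + β)) with hε_def
  have hε : 0 < ε := by positivity
  clear_value s d m ε
  -- key distance estimate on the strip
  have key : ∀ ζ : ℂ, |ζ.im| < β → ∀ t : ℝ, t = s ∨ t = -s →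
      2 * ε * (1 + ‖ζ‖) ≤ ‖ζ - Complex.I * t‖ := by
    intro ζ hζ t ht
    have hre : ‖ζ‖ ≤ |ζ.re| + |ζ.im| := Complex.norm_le_abs_re_add_abs_im ζ
    obtain ⟨him1, him2⟩ := abs_lt.mp hζ
    have habs2 : (‖ζ - Complex.I * t‖) ^ 2 = ζ.re ^ 2 + (ζ.im - t) ^ 2 := by
      rw [Complex.sq_norm, Complex.normSq_apply]
      simp [Complex.sub_re, Complex.sub_im, Complex.mul_re, Complex.mul_im]
      ring
    have hdist : d ≤ |ζ.im - t| := by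
      rcases ht with rfl | rfl
      · rw [abs_sub_comm, _root_.abs_of_nonneg (by linarith)]; linarith
      · rw [_root_.abs_of_nonneg (by linarith)]; linarith
    have hlin : 2 * ε * (1 + ‖ζ‖) ≤ (d + |ζ.re|) / 2 := by
      have h1 : 2 * ε * (1 + ‖ζ‖) ≤ 2 * ε * (1 + |ζ.re| + β) := by
        have h0 := abs_nonneg ζ.re
        have : ‖ζ‖ ≤ |ζ.re| + β := by linarith [abs_lt.mpr ⟨him1, him2⟩]
        nlinarith
      have heq : 2 * ε * (1 + |ζ.re| + β) = m * (1 + |ζ.re| + β) / (2 * (1 + β)) := by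
        rw [hε_def]; field_simp; ring
      have h2 : m * (1 + |ζ.re| + β) / (2 * (1 + β)) ≤ (m + |ζ.re|) / 2 := by
        rw [div_le_div_iff₀ (by positivity) two_pos]
        nlinarith [abs_nonneg ζ.re, hm.le, hm1, hβ]
      have h3 : (m + |ζ.re|) / 2 ≤ (d + |ζ.re|) / 2 := by linarith
      calc 2 * ε * (1 + ‖ζ‖) ≤ 2 * ε * (1 + |ζ.re| + β) := h1
        _ = m * (1 + |ζ.re| + β) / (2 * (1 + β)) := heq
        _ ≤ (m + |ζ.re|) / 2 := h2
        _ ≤ (d + |ζ.re|) / 2 := h3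
    have h4 : d ^ 2 ≤ (ζ.im - t) ^ 2 := by
      have := pow_le_pow_left₀ hd.le hdist 2
      rwa [_root_.sq_abs] at this
    have hsq : ((d + |ζ.re|) / 2) ^ 2 ≤ (‖ζ - Complex.I * t‖) ^ 2 := by
      rw [habs2]
      have h5 := sq_half_add_le d |ζ.re| hd.le (abs_nonneg _)
      rw [_root_.sq_abs] at h5
      linarith
    refine hlin.trans ?_
    have hhalf : 0 ≤ (d + |ζ.re|) / 2 := by positivity
    exact (pow_le_pow_iff_left₀ hhalf (norm_nonneg _) two_ne_zero).mp hsq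
  -- the multiplier and the constant
  set f : ℂ → ℂ := fun z : ℂ => ((z ^ 2 + (b : ℂ)) / (z ^ 2 + (b : ℂ) + (σ : ℂ))) ^ k with hf_def
  set M : ℝ := (1 + |σ| / ε ^ 2) ^ k with hM_def
  have hM1 : 1 ≤ M := by
    rw [hM_def]
    calc (1:ℝ) = 1 ^ k := (one_pow k).symm
      _ ≤ (1 + |σ| / ε ^ 2) ^ k := by
          apply pow_le_pow_left₀ one_pos.le
          have : (0:ℝ) ≤ |σ| / ε ^ 2 := by positivity
          linarith
  refine ⟨(j ! : ℝ) * M / ε ^ j, by positivity, fun ζ hζ => ?_⟩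
  set A : ℝ := ‖ζ‖ with hA_def
  have hA0 : 0 ≤ A := norm_nonneg ζ
  set R : ℝ := ε * (1 + A) with hR_def
  have hR : 0 < R := by positivity
  have hsC : (s:ℂ) ^ 2 = (b:ℂ) + (σ:ℂ) := by
    rw [← Complex.ofReal_pow, hs2, Complex.ofReal_add]
  -- denominator bound on the closed ball
  have hball : ∀ w ∈ Metric.closedBall ζ R, ∀ t : ℝ, t = s ∨ t = -s →
      ε ≤ ‖w - Complex.I * t‖ := by
    intro w hw t ht
    have h1 := key ζ hζ t ht
    have h2 : ‖ζ - Complex.I * t‖ ≤ ‖ζ - w‖ + ‖w - Complex.I * t‖ := by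
      calc ‖ζ - Complex.I * t‖ = ‖(ζ - w) + (w - Complex.I * t)‖ := by ring_nf
        _ ≤ _ := norm_add_le _ _
    have h3 : ‖ζ - w‖ ≤ R := by
      rw [mem_closedBall, dist_eq_norm] at hw
      rw [norm_sub_rev]
      exact hw
    have h4 : ε * (1 + A) ≤ ‖w - Complex.I * t‖ := by
      rw [hR_def] at h3
      linarith
    have h5 : ε ≤ ε * (1 + A) := le_mul_of_one_le_right hε.le (by linarith)
    linarith
  have hDfact : ∀ w : ℂ, w ^ 2 + (b:ℂ) + (σ:ℂ) = (w - Complex.I * s) * (w - Complex.I * (-s:ℝ)) := by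
    intro w
    have h1 : (w - Complex.I * ((-s:ℝ):ℂ)) = w + Complex.I * (s:ℂ) := by push_cast; ring
    rw [h1, Dfact w (s:ℂ), hsC]; ring
  have hDlow : ∀ w ∈ Metric.closedBall ζ R, ε ^ 2 ≤ ‖w ^ 2 + (b:ℂ) + (σ:ℂ)‖ := by
    intro w hw
    rw [hDfact w, norm_mul]
    calc ε ^ 2 = ε * ε := sq ε
      _ ≤ _ := mul_le_mul (hball w hw s (Or.inl rfl)) (hball w hw (-s) (Or.inr rfl)) hε.le
          (norm_nonneg _)
  have hDne : ∀ w ∈ Metric.closedBall ζ R, w ^ 2 + (b:ℂ) + (σ:ℂ) ≠ 0 := by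
    intro w hw h0
    have := hDlow w hw
    rw [h0, norm_zero] at this
    nlinarith
  -- differentiability
  have hdiff : DifferentiableOn ℂ f (Metric.closedBall ζ R) := by
    apply DifferentiableOn.pow
    exact DifferentiableOn.div
      (((differentiable_pow 2).differentiableOn).add_const _)
      ((((differentiable_pow 2).differentiableOn).add_const _).add_const _)
      hDne
  -- bound on the ball
  have hbound : ∀ w ∈ Metric.closedBall ζ R, ‖f w‖ ≤ M := by
    intro w hw
    rw [hf_def, hM_def]
    simp only [norm_pow]
    apply pow_le_pow_left₀ (norm_nonneg _)
    have hne := hDne w hw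
    have hlow := hDlow w hw
    have heq : (w ^ 2 + (b:ℂ)) / (w ^ 2 + (b:ℂ) + (σ:ℂ)) = 1 - (σ:ℂ) / (w ^ 2 + (b:ℂ) + (σ:ℂ)) := by
      field_simp
      ring
    rw [heq]
    calc ‖1 - (σ:ℂ) / (w ^ 2 + (b:ℂ) + (σ:ℂ))‖
        ≤ ‖(1:ℂ)‖ + ‖(σ:ℂ) / (w ^ 2 + (b:ℂ) + (σ:ℂ))‖ := norm_sub_le _ _
      _ = 1 + |σ| / ‖w ^ 2 + (b:ℂ) + (σ:ℂ)‖ := by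
          rw [norm_one, norm_div, Complex.norm_real, Real.norm_eq_abs]
      _ ≤ 1 + |σ| / ε ^ 2 := by
          have h := div_le_div_of_nonneg_left (abs_nonneg σ) (by positivity : (0:ℝ) < ε ^ 2) hlow
          linarith
  -- Cauchy estimate
  have hcauchy := cauchy_bound hR hdiff hbound j
  refine hcauchy.trans (le_of_eq ?_)
  rw [hR_def, mul_pow, ← div_div]
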